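/- Let ψ(s) = (1/2)exp(−|s|) for s ∈ ℝ and f(t) = −exp(−t) for t ∈ [0,1], and for β ≥ 0 set T(β) = ∫_ℝ inf_{t∈[0,1]}(|f(t)| ψ(s − βt)) ds = ∫_ℝ inf_{t∈[0,1]}( e^{−t} · (1/2) e^{−|s−βt|} ) ds. Then T(β) = exp(−1) for every β ∈ [0,1], while T(β) = exp(−(1+β)/2) for every β > 1. -/

import Mathlib

open MeasureTheory

private lemma inf_eq_max (β s : ℝ) :
    (⨅ t : Set.Icc (0:ℝ) 1,
        Real.exp (-(t : ℝ)) * ((1 / 2) * Real.exp (-|s - β * (t : ℝ)|)))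
      = (1 / 2) * Real.exp (-(max |s| (1 + |s - β|))) := by
  have hbdd : BddBelow (Set.range fun t : Set.Icc (0:ℝ) 1 =>
      Real.exp (-(t : ℝ)) * ((1 / 2) * Real.exp (-|s - β * (t : ℝ)|))) := by
    refine ⟨0, ?_⟩
    rintro x ⟨t, rfl⟩
    positivity
  apply le_antisymm
  · rcases le_total |s| (1 + |s - β|) with h | h
    · have h1 : (1:ℝ) ∈ Set.Icc (0:ℝ) 1 := by constructor <;> norm_num
      refine le_trans (ciInf_le hbdd ⟨1, h1⟩) ?_
      rw [max_eq_right h]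
      exact le_of_eq (by rw [neg_add, Real.exp_add]; ring)
    · have h0 : (0:ℝ) ∈ Set.Icc (0:ℝ) 1 := by constructor <;> norm_num
      refine le_trans (ciInf_le hbdd ⟨0, h0⟩) ?_
      rw [max_eq_left h]
      simp [Real.exp_zero]
  · apply le_ciInf
    rintro ⟨t, ht0, ht1⟩
    have keq : Real.exp (-t) * ((1 / 2) * Real.exp (-|s - β * t|))
        = (1 / 2) * Real.exp (-(t + |s - β * t|)) := by
      rw [neg_add, Real.exp_add]; ring
    rw [keq]
    have habs : |s - β * t| ≤ (1 - t) * |s| + t * |s - β| := by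
      have hx : s - β * t = (1 - t) * s + t * (s - β) := by ring
      rw [hx]
      calc |(1 - t) * s + t * (s - β)| ≤ |(1 - t) * s| + |t * (s - β)| := abs_add_le _ _
        _ = (1 - t) * |s| + t * |s - β| := by
            rw [abs_mul, abs_mul, abs_of_nonneg (by linarith), abs_of_nonneg ht0]
    have hM1 : |s| ≤ max |s| (1 + |s - β|) := le_max_left _ _
    have hM2 : 1 + |s - β| ≤ max |s| (1 + |s - β|) := le_max_right _ _
    have hle : t + |s - β * t| ≤ max |s| (1 + |s - β|) := by nlinarith
    have := Real.exp_le_exp.2 (neg_le_neg hle)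
    linarith

private lemma integral_two_exp (m c d : ℝ) (G : ℝ → ℝ)
    (h1 : ∀ s ∈ Set.Iic m, G s = c * Real.exp s)
    (h2 : ∀ s ∈ Set.Ioi m, G s = d * Real.exp (-s)) :
    ∫ s, G s = c * Real.exp m + d * Real.exp (-m) := by
  have hIic : IntegrableOn G (Set.Iic m) := by
    refine (IntegrableOn.congr_fun ?_ (fun s hs => (h1 s hs).symm) measurableSet_Iic)
    exact (integrableOn_exp_Iic m).const_mul c
  have hIoi : IntegrableOn G (Set.Ioi m) := by
    refine (IntegrableOn.congr_fun ?_ (fun s hs => (h2 s hs).symm) measurableSet_Ioi)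
    have := (exp_neg_integrableOn_Ioi m (b := 1) one_pos).const_mul d
    simpa [IntegrableOn] using this
  rw [← intervalIntegral.integral_Iic_add_Ioi hIic hIoi]
  have e1 : ∫ s in Set.Iic m, G s = c * Real.exp m := by
    rw [setIntegral_congr_fun measurableSet_Iic h1, integral_const_mul, integral_exp_Iic]
  have e2 : ∫ s in Set.Ioi m, G s = d * Real.exp (-m) := by
    rw [setIntegral_congr_fun measurableSet_Ioi h2, integral_const_mul, integral_exp_neg_Ioi]
  rw [e1, e2]

/-- for `ψ(s) = exp(-|s|)/2` and `f(t) = -exp(-t)`, the functional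
`T(β) = ∫ inf_{t∈[0,1]}(|f(t)| ψ(s-βt)) ds` equals `exp(-1)` for all `β ∈ [0,1]` and
`exp(-(1+β)/2)` for `β > 1`. -/
theorem stmt17 :
    (∀ β ∈ Set.Icc (0:ℝ) 1,
      (∫ s, ⨅ t : Set.Icc (0:ℝ) 1,
          Real.exp (-(t : ℝ)) * ((1 / 2) * Real.exp (-|s - β * (t : ℝ)|)))
        = Real.exp (-1))
    ∧ (∀ β : ℝ, 1 < β →
      (∫ s, ⨅ t : Set.Icc (0:ℝ) 1,
          Real.exp (-(t : ℝ)) * ((1 / 2) * Real.exp (-|s - β * (t : ℝ)|)))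
        = Real.exp (-((1 + β) / 2))) := by
  constructor
  · rintro β ⟨hβ0, hβ1⟩
    simp_rw [inf_eq_max]
    have key := integral_two_exp β ((1/2) * Real.exp (-1 - β)) ((1/2) * Real.exp (β - 1))
      (fun s => (1 / 2) * Real.exp (-(max |s| (1 + |s - β|)))) ?_ ?_
    · have e1 : Real.exp (-1 - β) * Real.exp β = Real.exp (-1) := by
        rw [← Real.exp_add]; norm_num
      have e2 : Real.exp (β - 1) * Real.exp (-β) = Real.exp (-1) := by
        rw [← Real.exp_add]; congr 1; ring
      rw [key, mul_assoc, mul_assoc, e1, e2]; ring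
    · intro s hs
      simp only [Set.mem_Iic] at hs
      have habs : |s - β| = β - s := by rw [abs_of_nonpos (by linarith : s - β ≤ 0)]; ring
      have hmax : max |s| (1 + |s - β|) = 1 + β - s := by
        rw [habs, max_eq_right]
        · ring
        · rcases abs_cases s with ⟨h1, h2⟩ | ⟨h1, h2⟩ <;> linarith
      simp only [hmax, mul_assoc, ← Real.exp_add]
      congr 2
      ring
    · intro s hs
      simp only [Set.mem_Ioi] at hs
      have habs : |s - β| = s - β := abs_of_nonneg (by linarith)
      have hmax : max |s| (1 + |s - β|) = 1 + s - β := by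
        rw [habs, max_eq_right]
        · ring
        · rcases abs_cases s with ⟨h1, h2⟩ | ⟨h1, h2⟩ <;> linarith
      simp only [hmax, mul_assoc, ← Real.exp_add]
      congr 2
      ring
  · rintro β hβ
    simp_rw [inf_eq_max]
    set m := (1 + β) / 2 with hm
    have key := integral_two_exp m ((1/2) * Real.exp (-(1 + β))) (1/2)
      (fun s => (1 / 2) * Real.exp (-(max |s| (1 + |s - β|)))) ?_ ?_
    · have e1 : Real.exp (-(1 + β)) * Real.exp m = Real.exp (-m) := by
        rw [← Real.exp_add]; congr 1; rw [hm]; ring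
      rw [key, mul_assoc, e1]; ring
    · intro s hs
      simp only [Set.mem_Iic, hm] at hs
      have habs : |s - β| = β - s := by rw [abs_of_nonpos (by linarith : s - β ≤ 0)]; ring
      have hmax : max |s| (1 + |s - β|) = 1 + β - s := by
        rw [habs, max_eq_right]
        · ring
        · rcases abs_cases s with ⟨h1, h2⟩ | ⟨h1, h2⟩ <;> linarith
      simp only [hmax, mul_assoc, ← Real.exp_add]
      congr 2
      ring
    · intro s hs
      simp only [Set.mem_Ioi, hm] at hs
      have hmax : max |s| (1 + |s - β|) = s := by
        rw [max_eq_left]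
        · exact abs_of_nonneg (by linarith)
        · rcases abs_cases (s - β) with ⟨h1, h2⟩ | ⟨h1, h2⟩ <;>
            rcases abs_cases s with ⟨h3, h4⟩ | ⟨h3, h4⟩ <;> linarith
      simp only [hmax]
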